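/- Let α > 1, t > 0, p ∈ [0,1] and x ∈ ℝ, and write c = cos(π/(2α)), s = sin(π/(2α)). Then (1/(2π)) ∫_{-∞}^{∞} e^{−iγx} · [ p · e^{−t|γ|c + i t s γ} + (1−p) · e^{−t|γ|c − i t s γ} ] dγ = f_{α,p,t}(x); in particular the inverse Fourier transform of this mixture of asymmetric Cauchy characteristic functions is the probability density f_{α,p,t}. -/

import Mathlib

open Real MeasureTheory Complex Set Filter

lemma my_cexp_integral_Ioi {c : ℂ} (hc : 0 < c.re) :
    ∫ γ : ℝ in Set.Ioi (0:ℝ), Complex.exp (-(c * γ)) = 1 / c := by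
  have hc0 : c ≠ 0 := fun h => by simp [h] at hc
  have hint : IntegrableOn (fun γ : ℝ => Complex.exp (-(c * γ))) (Set.Ioi 0) := by
    refine Integrable.mono' (exp_neg_integrableOn_Ioi 0 hc) ?_ ?_
    · exact (Complex.continuous_exp.comp
        ((continuous_const.mul Complex.continuous_ofReal).neg)).aestronglyMeasurable.restrict
    · filter_upwards with γ
      rw [Complex.norm_exp]
      simp [neg_mul]
  have hderiv : ∀ γ ∈ Set.Ici (0:ℝ),
      HasDerivAt (fun γ : ℝ => -Complex.exp (-(c * γ)) / c) (Complex.exp (-(c * γ))) γ := by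
    intro γ _
    have h1 : HasDerivAt (fun γ : ℝ => -(c * γ)) (-c) γ := by
      simpa [Pi.neg_def] using ((Complex.ofRealCLM.hasDerivAt (x := γ)).const_mul c).neg
    have h2 : HasDerivAt (fun y : ℝ => -(Complex.exp (-(c * y)) / c)) (-(Complex.exp (-(c * γ)) * -c / c)) γ :=
      (h1.cexp.div_const c).neg
    convert h2 using 1
    · ext y; rw [neg_div]
    · rw [mul_neg, neg_div, neg_neg, mul_div_assoc, div_self hc0, mul_one]
  have hmul : Tendsto (fun γ : ℝ => c.re * γ) atTop atTop :=
    (tendsto_const_mul_atTop_of_pos hc).mpr tendsto_id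
  have htend : Tendsto (fun γ : ℝ => -Complex.exp (-(c * γ)) / c) atTop (nhds 0) := by
    rw [tendsto_zero_iff_norm_tendsto_zero]
    have heq : (fun γ : ℝ => ‖-Complex.exp (-(c * γ)) / c‖)
        = fun γ : ℝ => Real.exp (-(c.re * γ)) / ‖c‖ := by
      ext γ
      rw [norm_div, norm_neg, Complex.norm_exp]
      simp [neg_mul]
    rw [heq]
    have h3 : Tendsto (fun γ : ℝ => Real.exp (-(c.re * γ))) atTop (nhds 0) :=
      Real.tendsto_exp_atBot.comp (tendsto_neg_atTop_atBot.comp hmul)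
    simpa using h3.div_const ‖c‖
  rw [integral_Ioi_of_hasDerivAt_of_tendsto' hderiv hint htend]
  simp [neg_div]

lemma my_cauchy_integrableOn_Ioi (a b : ℝ) (ha : 0 < a) :
    IntegrableOn (fun γ : ℝ => Complex.exp (↑(-(a * |γ|)) + ↑(b * γ) * Complex.I))
      (Set.Ioi 0) := by
  refine Integrable.mono' (exp_neg_integrableOn_Ioi 0 ha) ?_ ?_
  · have hcont : Continuous (fun γ : ℝ => Complex.exp (↑(-(a * |γ|)) + ↑(b * γ) * Complex.I)) := by
      apply Complex.continuous_exp.comp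
      fun_prop
    exact hcont.aestronglyMeasurable.restrict
  · filter_upwards [ae_restrict_mem measurableSet_Ioi] with γ hγ
    rw [Complex.norm_exp]
    have : |γ| = γ := abs_of_pos hγ
    simp [this, neg_mul]

lemma my_cauchy_integrable (a b : ℝ) (ha : 0 < a) :
    Integrable (fun γ : ℝ => Complex.exp (↑(-(a * |γ|)) + ↑(b * γ) * Complex.I)) := by
  rw [← integrableOn_univ, ← Set.Iic_union_Ioi (a := (0:ℝ)), integrableOn_union]
  refine ⟨?_, my_cauchy_integrableOn_Ioi a b ha⟩
  rw [← (Measure.measurePreserving_neg (volume : Measure ℝ)).integrableOn_comp_preimage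
      (Homeomorph.neg ℝ).measurableEmbedding]
  simp only [Function.comp_def, neg_preimage, neg_Iic, neg_zero]
  have : IntegrableOn (fun γ : ℝ => Complex.exp (↑(-(a * |γ|)) + ↑((-b) * γ) * Complex.I))
      (Set.Ici 0) := by
    rw [integrableOn_Ici_iff_integrableOn_Ioi]
    exact my_cauchy_integrableOn_Ioi a (-b) ha
  refine this.congr_fun (fun γ _ => ?_) measurableSet_Ici
  simp only [abs_neg]
  push_cast
  ring_nf

lemma my_ne_zero_1 (a b : ℝ) (ha : 0 < a) : (a : ℂ) - b * Complex.I ≠ 0 := by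
  intro h
  have := congrArg Complex.re h
  simp at this
  exact ha.ne' this

lemma my_ne_zero_2 (a b : ℝ) (ha : 0 < a) : (a : ℂ) + b * Complex.I ≠ 0 := by
  intro h
  have := congrArg Complex.re h
  simp at this
  exact ha.ne' this

lemma my_cauchy_ft (a b : ℝ) (ha : 0 < a) :
    ∫ γ : ℝ, Complex.exp (↑(-(a * |γ|)) + ↑(b * γ) * Complex.I)
      = ((2 * a / (a ^ 2 + b ^ 2) : ℝ) : ℂ) := by
  have hIoi := my_cauchy_integrableOn_Ioi a b ha
  have hIic : IntegrableOn (fun γ : ℝ => Complex.exp (↑(-(a * |γ|)) + ↑(b * γ) * Complex.I))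
      (Set.Iic 0) :=
    ((my_cauchy_integrable a b ha).restrict)
  rw [← intervalIntegral.integral_Iic_add_Ioi hIic hIoi]
  have hpos : ∫ γ : ℝ in Set.Ioi (0:ℝ), Complex.exp (↑(-(a * |γ|)) + ↑(b * γ) * Complex.I)
      = 1 / ((a : ℂ) - b * Complex.I) := by
    rw [← my_cexp_integral_Ioi (c := (a : ℂ) - b * Complex.I) (by simp [ha])]
    refine setIntegral_congr_fun measurableSet_Ioi (fun γ hγ => ?_)
    rw [abs_of_pos hγ]
    congr 1
    push_cast
    ring
  have hneg : ∫ γ : ℝ in Set.Iic (0:ℝ), Complex.exp (↑(-(a * |γ|)) + ↑(b * γ) * Complex.I)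
      = 1 / ((a : ℂ) + b * Complex.I) := by
    rw [show (0:ℝ) = -0 by ring, ← integral_comp_neg_Ioi]
    rw [← my_cexp_integral_Ioi (c := (a : ℂ) + b * Complex.I) (by simp [ha])]
    refine setIntegral_congr_fun measurableSet_Ioi (fun γ hγ => ?_)
    rw [abs_neg, abs_of_pos hγ]
    congr 1
    push_cast
    ring
  rw [hpos, hneg]
  have h1 := my_ne_zero_1 a b ha
  have h2 := my_ne_zero_2 a b ha
  have h3 : ((a : ℂ) ^ 2 + b ^ 2) ≠ 0 := by
    have : ((a : ℂ) ^ 2 + b ^ 2) = ((a : ℂ) - b * Complex.I) * ((a : ℂ) + b * Complex.I) := by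
      ring_nf
      rw [Complex.I_sq]
      ring
    rw [this]
    exact mul_ne_zero h1 h2
  push_cast
  field_simp
  ring_nf
  rw [Complex.I_sq]
  ring


/-- The mixture-of-asymmetric-Cauchy probability density `f_{α,p,t}`. -/
noncomputable def cauchyMixDensity (α p t x : ℝ) : ℝ :=
  (t * Real.cos (π / (2 * α)) / π) *
    ((x ^ 2 + t ^ 2 + 2 * (2 * p - 1) * x * t * Real.sin (π / (2 * α))) /
      (x ^ 4 + t ^ 4 + 2 * x ^ 2 * t ^ 2 * Real.cos (π / α)))

/-- For `α > 1`, `t > 0`, `p ∈ [0,1]` and `x ∈ ℝ`, with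
`c = cos(π/(2α))` and `s = sin(π/(2α))`, the inverse Fourier transform of the
mixture of asymmetric Cauchy characteristic functions equals `f_{α,p,t}(x)`:
`(1/(2π)) ∫_ℝ e^{−iγx} [ p e^{−t|γ|c + i t s γ} + (1−p) e^{−t|γ|c − i t s γ} ] dγ
  = f_{α,p,t}(x)`. -/
theorem cauchyMix_inverse_fourier (α p t x : ℝ) (hα : 1 < α) (ht : 0 < t)
    (hp0 : 0 ≤ p) (hp1 : p ≤ 1) :
    (1 / (2 * (π : ℂ))) *
        ∫ γ : ℝ, Complex.exp (-Complex.I * (γ : ℂ) * (x : ℂ)) *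
          ((p : ℂ) * Complex.exp (-(t : ℂ) * (|γ| : ℝ) *
              (Real.cos (π / (2 * α)) : ℂ) +
              Complex.I * (t : ℂ) * (Real.sin (π / (2 * α)) : ℂ) * (γ : ℂ)) +
            (1 - (p : ℂ)) * Complex.exp (-(t : ℂ) * (|γ| : ℝ) *
              (Real.cos (π / (2 * α)) : ℂ) -
              Complex.I * (t : ℂ) * (Real.sin (π / (2 * α)) : ℂ) * (γ : ℂ))) =
      (cauchyMixDensity α p t x : ℂ) := by
  have hα0 : 0 < α := lt_trans one_pos hα
  set c := Real.cos (π / (2 * α)) with hc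
  set s := Real.sin (π / (2 * α)) with hs
  have hθ1 : 0 < π / (2 * α) := by positivity
  have hθ2 : π / (2 * α) < π / 2 := div_lt_div_of_pos_left Real.pi_pos two_pos (by linarith)
  have hcpos : 0 < c := Real.cos_pos_of_mem_Ioo ⟨by linarith, hθ2⟩
  have hac : 0 < t * c := mul_pos ht hcpos
  have hpt : ∀ γ : ℝ,
      Complex.exp (-Complex.I * (γ : ℂ) * (x : ℂ)) *
          ((p : ℂ) * Complex.exp (-(t : ℂ) * (|γ| : ℝ) * (c : ℂ) +
              Complex.I * (t : ℂ) * (s : ℂ) * (γ : ℂ)) +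
            (1 - (p : ℂ)) * Complex.exp (-(t : ℂ) * (|γ| : ℝ) * (c : ℂ) -
              Complex.I * (t : ℂ) * (s : ℂ) * (γ : ℂ)))
        = (p : ℂ) * Complex.exp (↑(-(t * c * |γ|)) + ↑((t * s - x) * γ) * Complex.I)
          + ((1 : ℂ) - p) * Complex.exp (↑(-(t * c * |γ|)) + ↑((-(t * s) - x) * γ) * Complex.I) := by
    intro γ
    rw [mul_add, mul_left_comm, mul_left_comm (Complex.exp _), ← Complex.exp_add, ← Complex.exp_add]
    congr 2 <;> · push_cast; ring
  simp only [hpt]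
  rw [integral_add ((my_cauchy_integrable (t*c) (t*s-x) hac).const_mul _)
      ((my_cauchy_integrable (t*c) (-(t*s)-x) hac).const_mul _),
    MeasureTheory.integral_const_mul, MeasureTheory.integral_const_mul,
    my_cauchy_ft (t*c) (t*s-x) hac, my_cauchy_ft (t*c) (-(t*s)-x) hac]
  have hpyth : s ^ 2 + c ^ 2 = 1 := Real.sin_sq_add_cos_sq _
  have hcos : Real.cos (π / α) = 2 * c ^ 2 - 1 := by
    rw [show π / α = 2 * (π / (2 * α)) by field_simp, hc, Real.cos_two_mul]
  have hd1 : 0 < (t*c)^2 + (t*s-x)^2 := by nlinarith [sq_nonneg (t*s-x)]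
  have hd2 : 0 < (t*c)^2 + (-(t*s)-x)^2 := by nlinarith [sq_nonneg (-(t*s)-x)]
  have hD : x^4 + t^4 + 2*x^2*t^2*Real.cos (π/α)
      = ((t*c)^2+(t*s-x)^2) * ((t*c)^2+(-(t*s)-x)^2) := by
    rw [hcos]
    linear_combination (4*x^2*t^2 - 2*(x^2+t^2)*t^2 - t^4*(s^2+c^2-1)) * hpyth
  have hnum : x^2+t^2+2*(2*p-1)*x*t*s
      = p*((t*c)^2+(-(t*s)-x)^2) + (1-p)*((t*c)^2+(t*s-x)^2) := by
    linear_combination (-(t^2)) * hpyth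
  have hπ := Real.pi_pos
  have hreal : 1/(2*π) * (p * (2*(t*c)/((t*c)^2+(t*s-x)^2))
        + (1-p) * (2*(t*c)/((t*c)^2+(-(t*s)-x)^2)))
      = cauchyMixDensity α p t x := by
    rw [cauchyMixDensity, ← hc, ← hs, hD, hnum]
    field_simp
  calc (1 / (2 * (π:ℂ))) * ((p:ℂ) * ((2*(t*c)/((t*c)^2+(t*s-x)^2) : ℝ) : ℂ)
        + (1 - (p:ℂ)) * ((2*(t*c)/((t*c)^2+(-(t*s)-x)^2) : ℝ) : ℂ))
      = ((1/(2*π) * (p * (2*(t*c)/((t*c)^2+(t*s-x)^2))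
          + (1-p) * (2*(t*c)/((t*c)^2+(-(t*s)-x)^2))) : ℝ) : ℂ) := by
        push_cast
        ring
    _ = (cauchyMixDensity α p t x : ℂ) := by rw [hreal]
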